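/- Let {w^k} be a sequence generated by the projected gradient iteration w^{k+1} ∈ P_{A_s}(w^k − λ∇f(w^k)) with w^0 ∈ A_s, and let w* be an accumulation point of {w^k}. Suppose the restricted Kurdyka–Łojasiewicz condition holds at w*: there exist ε > 0, θ ∈ [0,1), and κ > 0 such that for every J ∈ I_{w*} and every w ∈ A_J with ‖w − w*‖ < ε and f(w) > f(w*), one has (f(w) − f(w*))^θ ≤ κ·‖(∇f(w))_J‖. Then the full sequence {w^k} converges to w*. -/

import Mathlib

open Filter Topology

noncomputable section

def spSet (n s : ℕ) : Set (EuclideanSpace ℝ (Fin n)) :=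
  {w | (Finset.univ.filter fun i => w i ≠ 0).card ≤ s}

def projSet {n : ℕ} (A : Set (EuclideanSpace ℝ (Fin n))) (z : EuclideanSpace ℝ (Fin n)) :
    Set (EuclideanSpace ℝ (Fin n)) :=
  {y | y ∈ A ∧ ∀ x ∈ A, ‖z - y‖ ≤ ‖z - x‖}

def coordSub {n : ℕ} (J : Finset (Fin n)) : Set (EuclideanSpace ℝ (Fin n)) :=
  {w | ∀ i ∉ J, w i = 0}

def coordRestrict {n : ℕ} (J : Finset (Fin n)) (v : EuclideanSpace ℝ (Fin n)) :
    EuclideanSpace ℝ (Fin n) :=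
  (EuclideanSpace.equiv (Fin n) ℝ).symm (fun i => if i ∈ J then v i else 0)

open scoped RealInnerProductSpace

variable {n s : ℕ}
lemma coordRestrict_apply (J : Finset (Fin n)) (v : EuclideanSpace ℝ (Fin n)) (i : Fin n) :
    coordRestrict J v i = if i ∈ J then v i else 0 := rfl
lemma my_norm_sq_eq (x : EuclideanSpace ℝ (Fin n)) : ‖x‖ ^ 2 = ∑ i, (x i) ^ 2 := by
  rw [← real_inner_self_eq_norm_sq, PiLp.inner_apply]; simp [sq]

lemma coord_abs_le_norm {n : ℕ} (x : EuclideanSpace ℝ (Fin n)) (i : Fin n) : |x i| ≤ ‖x‖ := by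
  have h1 : (x i) ^ 2 ≤ ‖x‖ ^ 2 := by
    rw [my_norm_sq_eq]
    exact Finset.single_le_sum (fun j _ => sq_nonneg (x j)) (Finset.mem_univ i)
  calc |x i| = Real.sqrt ((x i) ^ 2) := (Real.sqrt_sq_eq_abs _).symm
    _ ≤ Real.sqrt (‖x‖ ^ 2) := Real.sqrt_le_sqrt h1
    _ = ‖x‖ := Real.sqrt_sq (norm_nonneg x)

lemma pyth (J : Finset (Fin n)) (z x : EuclideanSpace ℝ (Fin n)) (hx : x ∈ coordSub J) :
    ‖z - x‖ ^ 2 = ‖coordRestrict J z - x‖ ^ 2 + ‖z - coordRestrict J z‖ ^ 2 := by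
  rw [my_norm_sq_eq, my_norm_sq_eq, my_norm_sq_eq, ← Finset.sum_add_distrib]
  refine Finset.sum_congr rfl fun i _ => ?_
  by_cases hi : i ∈ J
  · simp [PiLp.sub_apply, coordRestrict_apply, hi]
  · simp [PiLp.sub_apply, coordRestrict_apply, hi, hx i hi]

lemma coordRestrict_mem_coordSub (J : Finset (Fin n)) (v : EuclideanSpace ℝ (Fin n)) :
    coordRestrict J v ∈ coordSub J := fun i hi => by simp [coordRestrict_apply, hi]

lemma coordRestrict_mem_spSet (J : Finset (Fin n)) (hJ : J.card = s)
    (v : EuclideanSpace ℝ (Fin n)) : coordRestrict J v ∈ spSet n s := by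
  have hsub : (Finset.univ.filter fun i => coordRestrict J v i ≠ 0) ⊆ J := by
    intro i hi
    simp only [Finset.mem_filter] at hi
    by_contra hiJ
    exact hi.2 (by simp [coordRestrict_apply, hiJ])
  calc (Finset.univ.filter fun i => coordRestrict J v i ≠ 0).card ≤ J.card :=
        Finset.card_le_card hsub
    _ = s := hJ

lemma norm_coordRestrict_le (J : Finset (Fin n)) (v : EuclideanSpace ℝ (Fin n)) :
    ‖coordRestrict J v‖ ≤ ‖v‖ := by
  have h : ‖coordRestrict J v‖ ^ 2 ≤ ‖v‖ ^ 2 := by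
    rw [my_norm_sq_eq, my_norm_sq_eq]
    refine Finset.sum_le_sum fun i _ => ?_
    by_cases hi : i ∈ J <;> simp [coordRestrict_apply, hi, sq_nonneg]
  nlinarith [norm_nonneg (coordRestrict J v), norm_nonneg v]

lemma coordRestrict_sub (J : Finset (Fin n)) (a b : EuclideanSpace ℝ (Fin n)) :
    coordRestrict J (a - b) = coordRestrict J a - coordRestrict J b := by
  ext i
  by_cases hi : i ∈ J <;> simp [PiLp.sub_apply, coordRestrict_apply, hi]

/-- projection onto the sparsity set, restricted support characterization -/
lemma proj_eq_coordRestrict {z y : EuclideanSpace ℝ (Fin n)}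
    (hy : y ∈ projSet (spSet n s) z) (J : Finset (Fin n)) (hJ : J.card = s)
    (hsupp : y ∈ coordSub J) : y = coordRestrict J z := by
  have h1 : ‖z - y‖ ≤ ‖z - coordRestrict J z‖ :=
    hy.2 _ (coordRestrict_mem_spSet J hJ z)
  have h2 := pyth J z y hsupp
  have h3 : ‖coordRestrict J z - y‖ ^ 2 ≤ 0 := by
    nlinarith [norm_nonneg (z - y), norm_nonneg (z - coordRestrict J z)]
  have h4 : coordRestrict J z - y = 0 := by
    have := norm_nonneg (coordRestrict J z - y)
    have h5 : ‖coordRestrict J z - y‖ = 0 := by nlinarith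
    exact norm_eq_zero.mp h5
  exact (sub_eq_zero.mp h4).symm

lemma descent_lemma {n : ℕ} (f : EuclideanSpace ℝ (Fin n) → ℝ)
    (f' : EuclideanSpace ℝ (Fin n) → EuclideanSpace ℝ (Fin n)) (L : ℝ) (hL : 0 ≤ L)
    (hgrad : ∀ x, HasGradientAt f (f' x) x)
    (hlip : ∀ x y, ‖f' x - f' y‖ ≤ L * ‖x - y‖) (x y : EuclideanSpace ℝ (Fin n)) :
    f y ≤ f x + ⟪f' x, y - x⟫ + L / 2 * ‖y - x‖ ^ 2 := by
  set v := y - x with hv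
  have hline : ∀ t : ℝ, HasDerivAt (fun t : ℝ => x + t • v) v t := fun t => by
    simpa using ((hasDerivAt_id t).smul_const v).const_add x
  have hg : ∀ t : ℝ, HasDerivAt (fun t : ℝ => f (x + t • v)) ⟪f' (x + t • v), v⟫ t := by
    intro t
    have h1 := (hgrad (x + t • v)).hasFDerivAt.comp_hasDerivAt t (hline t)
    simpa [InnerProductSpace.toDual_apply_apply, Function.comp_def] using h1
  have hcf' : Continuous f' := by
    have hlw : LipschitzWith (Real.toNNReal L) f' := by
      apply LipschitzWith.of_dist_le_mul
      intro a b
      rw [dist_eq_norm, dist_eq_norm, Real.coe_toNNReal L hL]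
      exact hlip a b
    exact hlw.continuous
  have hcont : Continuous fun t : ℝ => ⟪f' (x + t • v), v⟫ :=
    (hcf'.comp (by continuity)).inner continuous_const
  have key : f y - f x = ∫ t in (0:ℝ)..1, ⟪f' (x + t • v), v⟫ := by
    rw [intervalIntegral.integral_eq_sub_of_hasDerivAt (fun t _ => hg t)
      (hcont.intervalIntegrable 0 1)]
    simp [hv]
  have hcont2 : Continuous fun t : ℝ => ⟪f' x, v⟫ + L * t * ‖v‖ ^ 2 := by fun_prop
  have hbound : (∫ t in (0:ℝ)..1, ⟪f' (x + t • v), v⟫) ≤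
      ∫ t in (0:ℝ)..1, (⟪f' x, v⟫ + L * t * ‖v‖ ^ 2) := by
    apply intervalIntegral.integral_mono_on (by norm_num) (hcont.intervalIntegrable 0 1)
      (hcont2.intervalIntegrable 0 1)
    intro t ht
    have h2 : ⟪f' (x + t • v) - f' x, v⟫ ≤ L * t * ‖v‖ ^ 2 := by
      calc ⟪f' (x + t • v) - f' x, v⟫ ≤ ‖f' (x + t • v) - f' x‖ * ‖v‖ :=
            real_inner_le_norm _ _
        _ ≤ (L * ‖x + t • v - x‖) * ‖v‖ := by
            have := hlip (x + t • v) x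
            nlinarith [norm_nonneg v]
        _ = L * t * ‖v‖ ^ 2 := by
            rw [add_sub_cancel_left, norm_smul, Real.norm_eq_abs, abs_of_nonneg ht.1]
            ring
    have h3 : ⟪f' (x + t • v), v⟫ = ⟪f' x, v⟫ + ⟪f' (x + t • v) - f' x, v⟫ := by
      rw [inner_sub_left]; ring
    linarith
  have hrhs : (∫ t in (0:ℝ)..1, (⟪f' x, v⟫ + L * t * ‖v‖ ^ 2)) =
      ⟪f' x, v⟫ + L / 2 * ‖v‖ ^ 2 := by
    have hcont3 : Continuous fun t : ℝ => L * t * ‖v‖ ^ 2 := by fun_prop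
    rw [intervalIntegral.integral_add (intervalIntegrable_const)
      (hcont3.intervalIntegrable 0 1)]
    have : (fun t : ℝ => L * t * ‖v‖ ^ 2) = fun t : ℝ => (L * ‖v‖ ^ 2) * t := by
      ext t; ring
    rw [this, intervalIntegral.integral_const_mul, integral_id]
    simp; ring
  linarith [key, hbound, hrhs.le, hrhs.ge]

lemma concave_rpow {a b θ : ℝ} (ha : 0 < a) (hb : 0 ≤ b) (hba : b ≤ a)
    (hθ0 : 0 ≤ θ) (hθ1 : θ < 1) :
    (1 - θ) * a ^ (-θ) * (a - b) ≤ a ^ (1 - θ) - b ^ (1 - θ) := by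
  set t := b / a with htdef
  have ht0 : 0 ≤ t := div_nonneg hb ha.le
  have key : t ^ (1 - θ) ≤ (1 - θ) * t + θ := by
    have h := Real.geom_mean_le_arith_mean2_weighted (w₁ := 1 - θ) (w₂ := θ)
      (p₁ := t) (p₂ := 1) (by linarith) hθ0 ht0 zero_le_one (by ring)
    simpa using h
  have hat : a * t = b := by rw [htdef]; field_simp
  have hb' : b ^ (1 - θ) = a ^ (1 - θ) * t ^ (1 - θ) := by
    rw [← Real.mul_rpow ha.le ht0, hat]
  have ha' : a ^ (-θ) * a = a ^ (1 - θ) := by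
    rw [show (1 - θ) = -θ + 1 by ring, Real.rpow_add ha, Real.rpow_one]
  have hA : 0 ≤ a ^ (1 - θ) := Real.rpow_nonneg ha.le _
  have hmul : a ^ (1 - θ) * t ^ (1 - θ) ≤ a ^ (1 - θ) * ((1 - θ) * t + θ) :=
    mul_le_mul_of_nonneg_left key hA
  have h1 : (1 - θ) * a ^ (-θ) * (a - b) =
      (1 - θ) * (a ^ (1 - θ) - a ^ (1 - θ) * t) := by
    rw [← ha', ← hat]; ring
  rw [h1, hb']
  nlinarith [hmul]

lemma sqrt_amgm {d a b : ℝ} (hd : 0 ≤ d) (ha : 0 ≤ a) (hb : 0 ≤ b) (h : d ^ 2 ≤ a * b) :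
    2 * d ≤ a + b := by
  nlinarith [sq_nonneg (a - b), sq_nonneg (a + b - 2 * d)]

set_option maxHeartbeats 2000000 in
/-- full convergence of the PG iterates under a restricted KL condition
at an accumulation point. -/
theorem stmt17 {n s : ℕ} (hs1 : 1 ≤ s) (hsn : s ≤ n)
    (f : EuclideanSpace ℝ (Fin n) → ℝ)
    (f' : EuclideanSpace ℝ (Fin n) → EuclideanSpace ℝ (Fin n))
    (L lam : ℝ) (hL : 0 < L)
    (hconv : ConvexOn ℝ Set.univ f)
    (hgrad : ∀ x, HasGradientAt f (f' x) x)
    (hlip : ∀ x y, ‖f' x - f' y‖ ≤ L * ‖x - y‖)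
    (hbdd : BddBelow (f '' spSet n s))
    (hlam0 : 0 < lam) (hlamL : lam < 1 / L)
    (w : ℕ → EuclideanSpace ℝ (Fin n))
    (hw0 : w 0 ∈ spSet n s)
    (hiter : ∀ k, w (k + 1) ∈ projSet (spSet n s) (w k - lam • f' (w k)))
    (wstar : EuclideanSpace ℝ (Fin n))
    (haccum : ∃ φ : ℕ → ℕ, StrictMono φ ∧ Tendsto (fun k => w (φ k)) atTop (𝓝 wstar))
    (ε θ κ : ℝ) (hε : 0 < ε) (hθ0 : 0 ≤ θ) (hθ1 : θ < 1) (hκ : 0 < κ)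
    (hKL : ∀ J : Finset (Fin n), J.card = s → wstar ∈ coordSub J →
      ∀ v ∈ coordSub J, ‖v - wstar‖ < ε → f wstar < f v →
        (f v - f wstar) ^ θ ≤ κ * ‖coordRestrict J (f' v)‖) :
    Tendsto w atTop (𝓝 wstar) := by
  obtain ⟨φ, hφmono, hφlim⟩ := haccum
  set c : ℝ := 1 / (2 * lam) - L / 2 with hcdef
  have hlamL' : lam * L < 1 := (lt_div_iff₀ hL).mp hlamL
  have hc0 : 0 < c := by
    have h1 : L / 2 < 1 / (2 * lam) := by
      rw [div_lt_div_iff₀ two_pos (by positivity)]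
      nlinarith
    simp only [hcdef]; linarith
  set M : ℝ := L + 1 / lam with hMdef
  have hM0 : 0 < M := by positivity
  -- all iterates are s-sparse
  have hsp : ∀ k, w k ∈ spSet n s := by
    intro k
    cases k with
    | zero => exact hw0
    | succ k => exact (hiter k).1
  set d : ℕ → ℝ := fun k => ‖w (k + 1) - w k‖ with hddef
  have hd0 : ∀ k, 0 ≤ d k := fun k => norm_nonneg _
  -- sufficient decrease
  have hdec : ∀ k, f (w (k + 1)) + c * d k ^ 2 ≤ f (w k) := by
    intro k
    set g := f' (w k) with hgdef
    set Δ := w (k + 1) - w k with hΔdef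
    have hproj := (hiter k).2 (w k) (hsp k)
    have h0 : w k - lam • g - w (k + 1) = -(Δ + lam • g) := by
      rw [hΔdef]; abel
    have h0' : w k - lam • g - w k = -(lam • g) := by abel
    rw [h0, h0', norm_neg, norm_neg] at hproj
    have hsq : ‖Δ + lam • g‖ ^ 2 ≤ ‖lam • g‖ ^ 2 :=
      pow_le_pow_left₀ (norm_nonneg _) hproj 2
    rw [norm_add_sq_real] at hsq
    have hinner : ‖Δ‖ ^ 2 + 2 * (lam * ⟪Δ, g⟫) ≤ 0 := by
      rw [real_inner_smul_right] at hsq; linarith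
    have hdesc := descent_lemma f f' L hL.le hgrad hlip (w k) (w (k + 1))
    rw [← hΔdef, ← hgdef] at hdesc
    have hcomm : ⟪g, Δ⟫ = ⟪Δ, g⟫ := real_inner_comm _ _
    have h2l : (0:ℝ) < 2 * lam := by linarith
    have hIb : ⟪Δ, g⟫ ≤ -(‖Δ‖ ^ 2 / (2 * lam)) := by
      rw [le_neg, div_le_iff₀ h2l]
      linarith
    have hSd : d k = ‖Δ‖ := rfl
    have hSl : (1 / (2 * lam)) * ‖Δ‖ ^ 2 = ‖Δ‖ ^ 2 / (2 * lam) := by ring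
    simp only [hcdef, hSd]
    linarith
  have hmono : ∀ k, f (w (k + 1)) ≤ f (w k) := fun k => by
    nlinarith [hdec k, mul_nonneg hc0.le (sq_nonneg (d k))]
  have hanti : Antitone fun k => f (w k) := antitone_nat_of_succ_le hmono
  have hcf : Continuous f := by
    rw [continuous_iff_continuousAt]
    exact fun x => (hgrad x).hasFDerivAt.differentiableAt.continuousAt
  have hflim : Tendsto (fun j => f (w (φ j))) atTop (𝓝 (f wstar)) :=
    (hcf.tendsto wstar).comp hφlim
  have hge : ∀ k, f wstar ≤ f (w k) := by
    intro k
    apply le_of_tendsto hflim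
    filter_upwards [eventually_ge_atTop k] with j hj
    exact hanti (hj.trans (hφmono.le_apply))
  have hftend : Tendsto (fun k => f (w k)) atTop (𝓝 (f wstar)) := by
    rw [Metric.tendsto_atTop]
    intro η hη
    obtain ⟨J0, hJ0⟩ := Metric.tendsto_atTop.mp hflim η hη
    refine ⟨φ J0, fun k hk => ?_⟩
    have h3 := hJ0 J0 le_rfl
    rw [Real.dist_eq] at h3 ⊢
    rw [abs_lt] at h3 ⊢
    have h2 : f (w k) ≤ f (w (φ J0)) := hanti hk
    constructor <;> [linarith [hge k]; linarith [hge (φ J0)]]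
  have hdtend : Tendsto d atTop (𝓝 0) := by
    have hshift : Tendsto (fun k => f (w (k + 1))) atTop (𝓝 (f wstar)) :=
      hftend.comp (tendsto_add_atTop_nat 1)
    have h2 : Tendsto (fun k => f (w k) - f (w (k + 1))) atTop (𝓝 0) := by
      simpa using hftend.sub hshift
    have hsq : Tendsto (fun k => d k ^ 2) atTop (𝓝 0) := by
      apply squeeze_zero (fun k => sq_nonneg (d k)) (g := fun k => (1 / c) * (f (w k) - f (w (k + 1))))
      · intro k
        have h4 : c * d k ^ 2 ≤ f (w k) - f (w (k + 1)) := by linarith [hdec k]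
        calc d k ^ 2 = (1 / c) * (c * d k ^ 2) := by field_simp
          _ ≤ 1 / c * (f (w k) - f (w (k + 1))) :=
              mul_le_mul_of_nonneg_left h4 (by positivity)
      · simpa using h2.const_mul (1 / c)
    have : Tendsto (fun k => Real.sqrt (d k ^ 2)) atTop (𝓝 0) := by
      have := (Real.continuous_sqrt.tendsto 0).comp hsq
      simpa [Function.comp_def] using this
    refine this.congr fun k => Real.sqrt_sq (hd0 k)
  by_cases hflat : ∃ k0, f (w k0) ≤ f wstar
  · -- f hits its limit value: sequence becomes constant
    obtain ⟨k0, hk0⟩ := hflat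
    have heq : ∀ m, k0 ≤ m → w m = w k0 := by
      intro m hm
      induction m with
      | zero => cases Nat.le_zero.mp hm; rfl
      | succ m ih =>
        rcases Nat.lt_or_ge m k0 with h | h
        · have : k0 = m + 1 := by omega
          rw [this]
        · have hwm : w m = w k0 := ih h
          have h1 : f (w m) ≤ f wstar := by rw [hwm]; exact hk0
          have h2 : f wstar ≤ f (w (m + 1)) := hge (m + 1)
          have h3 := hdec m
          have hd0' : d m = 0 := by
            have hq : d m ^ 2 ≤ 0 := by
              have : c * d m ^ 2 ≤ c * 0 := by linarith
              exact (mul_le_mul_iff_right₀ hc0).mp this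
            have h4 : d m ^ 2 = 0 := le_antisymm hq (sq_nonneg _)
            exact pow_eq_zero_iff two_ne_zero |>.mp h4
          have : w (m + 1) - w m = 0 := by
            have := norm_eq_zero.mp hd0'
            exact this
          rw [sub_eq_zero] at this
          rw [this, hwm]
    have hwstar : wstar = w k0 := by
      apply tendsto_nhds_unique hφlim
      have : ∀ᶠ j in atTop, w (φ j) = w k0 := by
        filter_upwards [eventually_ge_atTop k0] with j hj
        exact heq (φ j) (hj.trans hφmono.le_apply)
      exact tendsto_const_nhds.congr' (this.mono fun j hj => hj.symm)
    rw [hwstar]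
    apply tendsto_const_nhds.congr'
    filter_upwards [eventually_ge_atTop k0] with m hm
    exact (heq m hm).symm
  push_neg at hflat
  set e : ℕ → ℝ := fun k => f (w k) - f wstar with hedef
  have hepos : ∀ k, 0 < e k := fun k => sub_pos.mpr (hflat k)
  have heanti : ∀ k, e (k + 1) ≤ e k := fun k => by
    simp only [hedef]; linarith [hmono k]
  have hetend : Tendsto e atTop (𝓝 0) := by
    simpa using hftend.sub_const (f wstar)
  have h1θ : (0:ℝ) < 1 - θ := by linarith
  set Φ : ℕ → ℝ := fun k => e k ^ (1 - θ) with hΦdef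
  have hΦ0 : ∀ k, 0 ≤ Φ k := fun k => Real.rpow_nonneg (hepos k).le _
  have hΦanti : ∀ k, Φ (k + 1) ≤ Φ k := fun k =>
    Real.rpow_le_rpow (hepos (k + 1)).le (heanti k) h1θ.le
  have hΦtend : Tendsto Φ atTop (𝓝 0) := by
    have hco : ContinuousAt (fun x : ℝ => x ^ (1 - θ)) 0 :=
      Real.continuousAt_rpow_const 0 (1 - θ) (Or.inr h1θ.le)
    have := hco.tendsto.comp hetend
    simpa [Real.zero_rpow h1θ.ne', Function.comp_def] using this
  have hδex : ∃ δ : ℝ, 0 < δ ∧ δ ≤ ε ∧ ∀ v : EuclideanSpace ℝ (Fin n),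
      ‖v - wstar‖ < δ → ∀ i, wstar i ≠ 0 → v i ≠ 0 := by
    set T := Finset.univ.filter fun i => wstar i ≠ 0 with hT
    by_cases hTne : T.Nonempty
    · refine ⟨min ε (T.inf' hTne fun i => |wstar i|), ?_, min_le_left _ _, ?_⟩
      · apply lt_min hε
        rw [Finset.lt_inf'_iff]
        intro i hi
        rw [hT, Finset.mem_filter] at hi
        exact abs_pos.mpr hi.2
      · intro v hv i hi hvi
        have hiT : i ∈ T := by rw [hT, Finset.mem_filter]; exact ⟨Finset.mem_univ i, hi⟩
        have h1 : |v i - wstar i| ≤ ‖v - wstar‖ := by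
          have := coord_abs_le_norm (v - wstar) i
          simpa [PiLp.sub_apply] using this
        have h2 : (T.inf' hTne fun i => |wstar i|) ≤ |wstar i| :=
          Finset.inf'_le _ hiT
        rw [hvi, zero_sub, abs_neg] at h1
        have h3 : ‖v - wstar‖ < T.inf' hTne fun i => |wstar i| :=
          hv.trans_le (min_le_right _ _)
        linarith
    · exact ⟨ε, hε, le_rfl, fun v _ i hi => absurd ⟨i, by
        rw [hT, Finset.mem_filter]; exact ⟨Finset.mem_univ i, hi⟩⟩ hTne⟩
  obtain ⟨δ, hδ0, hδε, hδsupp⟩ := hδex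
  -- the KL gradient-step inequality
  have hstep : ∀ k, ‖w (k + 1) - wstar‖ < δ → e (k + 1) ^ θ ≤ κ * (M * d k) := by
    intro k hball
    have hcard : (Finset.univ.filter fun i => w (k + 1) i ≠ 0).card ≤ s := (hiter k).1
    obtain ⟨J, hSJ, -, hJcard⟩ := Finset.exists_subsuperset_card_eq
      (Finset.subset_univ (Finset.univ.filter fun i => w (k + 1) i ≠ 0)) hcard
      (by simpa using hsn)
    have huJ : w (k + 1) ∈ coordSub J := by
      intro i hi
      by_contra hne
      exact hi (hSJ (Finset.mem_filter.mpr ⟨Finset.mem_univ i, hne⟩))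
    have hwstarJ : wstar ∈ coordSub J := by
      intro i hi
      by_contra hne
      exact hi (hSJ (Finset.mem_filter.mpr ⟨Finset.mem_univ i, hδsupp _ hball i hne⟩))
    have hproj : w (k + 1) = coordRestrict J (w k - lam • f' (w k)) :=
      proj_eq_coordRestrict (hiter k) J hJcard huJ
    have h2 : coordRestrict J (f' (w k)) = (1 / lam) • coordRestrict J (w k - w (k + 1)) := by
      ext i
      by_cases hij : i ∈ J
      · have hpi : w (k + 1) i = w k i - lam * f' (w k) i := by
          rw [hproj]
          simp [coordRestrict_apply, hij, PiLp.sub_apply, PiLp.smul_apply, smul_eq_mul]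
        have hlne : lam ≠ 0 := hlam0.ne'
        simp only [coordRestrict_apply, hij, if_true, PiLp.smul_apply, PiLp.sub_apply,
          smul_eq_mul]
        rw [hpi]
        field_simp; ring
      · simp [coordRestrict_apply, hij]
    have hgb : ‖coordRestrict J (f' (w (k + 1)))‖ ≤ M * d k := by
      have hsplit : coordRestrict J (f' (w (k + 1))) =
          coordRestrict J (f' (w (k + 1)) - f' (w k)) + coordRestrict J (f' (w k)) := by
        rw [coordRestrict_sub]; abel
      have hb1 : ‖coordRestrict J (f' (w (k + 1)) - f' (w k))‖ ≤ L * d k :=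
        (norm_coordRestrict_le _ _).trans (hlip _ _)
      have hb2 : ‖coordRestrict J (f' (w k))‖ ≤ 1 / lam * d k := by
        rw [h2, norm_smul]
        have h3 : ‖coordRestrict J (w k - w (k + 1))‖ ≤ d k := by
          refine (norm_coordRestrict_le _ _).trans ?_
          rw [norm_sub_rev]
        have h4 : ‖(1:ℝ) / lam‖ = 1 / lam := Real.norm_of_nonneg (by positivity)
        rw [h4]
        exact mul_le_mul_of_nonneg_left h3 (by positivity)
      calc ‖coordRestrict J (f' (w (k + 1)))‖
          ≤ ‖coordRestrict J (f' (w (k + 1)) - f' (w k))‖ + ‖coordRestrict J (f' (w k))‖ := by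
            rw [hsplit]; exact norm_add_le _ _
        _ ≤ L * d k + 1 / lam * d k := add_le_add hb1 hb2
        _ = M * d k := by rw [hMdef]; ring
    have hKLa := hKL J hJcard hwstarJ (w (k + 1)) huJ (hball.trans_le hδε) (hflat (k + 1))
    calc e (k + 1) ^ θ ≤ κ * ‖coordRestrict J (f' (w (k + 1)))‖ := hKLa
      _ ≤ κ * (M * d k) := mul_le_mul_of_nonneg_left hgb hκ.le
  set C : ℝ := κ * M / ((1 - θ) * c) with hCdef
  have hC0 : 0 < C := div_pos (by positivity) (by positivity)
  -- the combined one-step inequality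
  have honestep : ∀ k, ‖w (k + 1) - wstar‖ < δ →
      2 * d (k + 1) ≤ d k + C * (Φ (k + 1) - Φ (k + 2)) := by
    intro k hball
    have hkl := hstep k hball
    have hdecr := hdec (k + 1)
    have hAB : e (k + 2) ≤ e (k + 1) := heanti (k + 1)
    have hA := hepos (k + 1)
    have hB := hepos (k + 2)
    have hconc := concave_rpow hA hB.le hAB hθ0 hθ1
    have hPQ : e (k + 1) ^ θ * e (k + 1) ^ (-θ) = 1 := by
      rw [← Real.rpow_add hA]; simp
    have hQ0 : 0 < e (k + 1) ^ (-θ) := Real.rpow_pos_of_pos hA _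
    have hD0 : 0 ≤ Φ (k + 1) - Φ (k + 2) := sub_nonneg.mpr (hΦanti (k + 1))
    have hediff : c * d (k + 1) ^ 2 ≤ e (k + 1) - e (k + 2) := by
      simp only [hedef]; linarith [hdecr]
    have step1 : e (k + 1) ^ (-θ) * (e (k + 1) - e (k + 2)) ≤
        (Φ (k + 1) - Φ (k + 2)) / (1 - θ) := by
      rw [le_div_iff₀ h1θ]
      calc e (k + 1) ^ (-θ) * (e (k + 1) - e (k + 2)) * (1 - θ)
          = (1 - θ) * e (k + 1) ^ (-θ) * (e (k + 1) - e (k + 2)) := by ring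
        _ ≤ Φ (k + 1) - Φ (k + 2) := by simp only [hΦdef]; exact hconc
    have step2 : e (k + 1) - e (k + 2) ≤
        (κ * (M * d k)) * ((Φ (k + 1) - Φ (k + 2)) / (1 - θ)) := by
      have hid : e (k + 1) - e (k + 2) =
          e (k + 1) ^ θ * (e (k + 1) ^ (-θ) * (e (k + 1) - e (k + 2))) := by
        rw [← mul_assoc, hPQ, one_mul]
      rw [hid]
      have hP0 : 0 ≤ e (k + 1) ^ θ := Real.rpow_nonneg hA.le _
      calc e (k + 1) ^ θ * (e (k + 1) ^ (-θ) * (e (k + 1) - e (k + 2)))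
          ≤ e (k + 1) ^ θ * ((Φ (k + 1) - Φ (k + 2)) / (1 - θ)) :=
            mul_le_mul_of_nonneg_left step1 hP0
        _ ≤ (κ * (M * d k)) * ((Φ (k + 1) - Φ (k + 2)) / (1 - θ)) :=
            mul_le_mul_of_nonneg_right hkl (div_nonneg hD0 h1θ.le)
    have hkey : d (k + 1) ^ 2 ≤ d k * (C * (Φ (k + 1) - Φ (k + 2))) := by
      have h5 : c * (d k * (C * (Φ (k + 1) - Φ (k + 2)))) =
          (κ * (M * d k)) * ((Φ (k + 1) - Φ (k + 2)) / (1 - θ)) := by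
        rw [hCdef]; field_simp
      have h6 : c * d (k + 1) ^ 2 ≤ c * (d k * (C * (Φ (k + 1) - Φ (k + 2)))) := by
        rw [h5]; exact hediff.trans step2
      exact (mul_le_mul_iff_right₀ hc0).mp h6
    have := sqrt_amgm (hd0 (k + 1)) (hd0 k) (mul_nonneg hC0.le hD0) hkey
    linarith
  -- telescoping distance bound
  have htel : ∀ a m : ℕ, a ≤ m → ‖w m - w a‖ ≤ ∑ k ∈ Finset.Ico a m, d k := by
    intro a m ham
    induction m, ham using Nat.le_induction with
    | base => simp
    | succ m ham ih =>
      rw [Finset.sum_Ico_succ_top ham]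
      have hstep1 : ‖w (m + 1) - w a‖ ≤ ‖w (m + 1) - w m‖ + ‖w m - w a‖ :=
        norm_sub_le_norm_sub_add_norm_sub _ _ _
      have hdm : ‖w (m + 1) - w m‖ = d m := rfl
      rw [hdm] at hstep1
      linarith [ih]
  -- choose the starting index K
  have hdφ : Tendsto (fun j => d (φ j - 1)) atTop (𝓝 0) := by
    refine hdtend.comp (tendsto_atTop_atTop.mpr fun b => ⟨b + 1, fun a ha => ?_⟩)
    have h7 : a ≤ φ a := hφmono.le_apply
    omega
  have hΦφ : Tendsto (fun j => C * Φ (φ j)) atTop (𝓝 0) := by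
    have := (hΦtend.comp hφmono.tendsto_atTop).const_mul C
    simpa using this
  have hwφ : Tendsto (fun j => ‖w (φ j) - wstar‖) atTop (𝓝 0) := by
    have h := (hφlim.sub_const wstar).norm
    simpa using h
  have hev : ∀ᶠ j in atTop, ‖w (φ j) - wstar‖ < δ / 3 ∧ d (φ j - 1) < δ / 3 ∧
      C * Φ (φ j) < δ / 3 ∧ 1 ≤ φ j := by
    have e1 := hwφ.eventually (eventually_lt_nhds (by linarith : (0:ℝ) < δ / 3))
    have e2 := hdφ.eventually (eventually_lt_nhds (by linarith : (0:ℝ) < δ / 3))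
    have e3 := hΦφ.eventually (eventually_lt_nhds (by linarith : (0:ℝ) < δ / 3))
    have e4 : ∀ᶠ j in atTop, 1 ≤ φ j := by
      filter_upwards [eventually_ge_atTop 1] with j hj
      exact hj.trans hφmono.le_apply
    filter_upwards [e1, e2, e3, e4] with j h1 h2 h3 h4
    exact ⟨h1, h2, h3, h4⟩
  obtain ⟨j0, hj0⟩ := hev.exists
  obtain ⟨hK1, hK2, hK3, hK4⟩ := hj0
  set K : ℕ := φ j0 with hKdef
  obtain ⟨K0, hK0⟩ : ∃ K0, K = K0 + 1 := ⟨K - 1, by omega⟩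
  have hKd : d (K - 1) = d K0 := by rw [hK0]; simp
  rw [hKd] at hK2
  -- the key invariant
  have hinv : ∀ m, K ≤ m → (∑ k ∈ Finset.Ico K m, d k) + d (m - 1) ≤
      d K0 + C * (Φ K - Φ m) := by
    intro m hm
    induction m, hm using Nat.le_induction with
    | base => rw [hK0]; simp
    | succ m hm ih =>
      have hmpos : 1 ≤ m := by omega
      obtain ⟨j, rfl⟩ : ∃ j, m = j + 1 := ⟨m - 1, by omega⟩
      have hball : ‖w (j + 1) - wstar‖ < δ := by
        have h1 : ‖w (j + 1) - w K‖ ≤ ∑ k ∈ Finset.Ico K (j + 1), d k := htel K (j + 1) hm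
        have h2 : ‖w (j + 1) - wstar‖ ≤ ‖w (j + 1) - w K‖ + ‖w K - wstar‖ :=
          norm_sub_le_norm_sub_add_norm_sub _ _ _
        have h3 : (∑ k ∈ Finset.Ico K (j + 1), d k) ≤ d K0 + C * Φ K := by
          have h4 := ih
          have h5 : 0 ≤ d (j + 1 - 1) := hd0 _
          have h6 : 0 ≤ C * Φ (j + 1) := mul_nonneg hC0.le (hΦ0 _)
          linarith [h4, h5, h6]
        calc ‖w (j + 1) - wstar‖ ≤ ‖w (j + 1) - w K‖ + ‖w K - wstar‖ := h2
          _ ≤ (d K0 + C * Φ K) + ‖w K - wstar‖ := by linarith [h1, h3]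
          _ < δ := by
              have : ‖w K - wstar‖ < δ / 3 := hK1
              linarith [hK2, hK3]
      have hos := honestep j hball
      rw [Finset.sum_Ico_succ_top hm]
      have hsimp1 : j + 1 + 1 - 1 = j + 1 := by omega
      have hsimp2 : j + 1 - 1 = j := by omega
      rw [hsimp1]
      rw [hsimp2] at ih
      linarith [ih, hos]
  -- summability of the step lengths
  have hsum : Summable d := by
    apply summable_of_sum_range_le hd0 (c := (∑ k ∈ Finset.range K, d k) + (d K0 + C * Φ K))
    intro m
    rcases le_or_gt m K with h | h
    · have h1 : (∑ k ∈ Finset.range m, d k) ≤ ∑ k ∈ Finset.range K, d k :=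
        Finset.sum_le_sum_of_subset_of_nonneg (Finset.range_subset_range.mpr h)
          (fun k _ _ => hd0 k)
      have h2 : 0 ≤ C * Φ K := mul_nonneg hC0.le (hΦ0 _)
      linarith [hd0 K0]
    · have hKm : K ≤ m := h.le
      have hsplit : (∑ k ∈ Finset.range K, d k) + (∑ k ∈ Finset.Ico K m, d k) =
          ∑ k ∈ Finset.range m, d k := by
        rw [Finset.range_eq_Ico, Finset.range_eq_Ico]
        exact Finset.sum_Ico_consecutive d (Nat.zero_le K) hKm
      have h3 : (∑ k ∈ Finset.Ico K m, d k) ≤ d K0 + C * Φ K := by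
        have h4 := hinv m hKm
        have h5 : 0 ≤ d (m - 1) := hd0 _
        have h6 : 0 ≤ C * Φ m := mul_nonneg hC0.le (hΦ0 _)
        linarith [h4, h5, h6]
      linarith
  -- conclude: Cauchy, limit exists and equals wstar
  have hcauchy : CauchySeq w := by
    apply cauchySeq_of_summable_dist
    refine hsum.congr fun k => ?_
    rw [dist_eq_norm, norm_sub_rev]
  obtain ⟨x, hx⟩ := cauchySeq_tendsto_of_complete hcauchy
  have hxstar : wstar = x :=
    tendsto_nhds_unique hφlim (hx.comp hφmono.tendsto_atTop)
  rw [hxstar]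
  exact hx
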